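/- Under PPTS, the probability that the sampled task contains a fixed label c in subset C_i equals (K^(M-1) · (n(c) + S_{-i}/K)) / (K^(M-1) · S) = (n(c) + S_{-i}/K)/S, where S is the total instance count over all labels and S_{-i} is the total over all subsets except C_i. -/

import Mathlib

open Finset

lemma filter_eq_piFinset_update {α : Type*} [DecidableEq α] {M : ℕ}
    (C : Fin M → Finset α) (j : Fin M) (x : α) (hx : x ∈ C j) :
    (Fintype.piFinset C).filter (fun T => T j = x)
      = Fintype.piFinset (Function.update C j {x}) := by
  ext T
  simp only [Finset.mem_filter, Fintype.mem_piFinset]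
  constructor
  · rintro ⟨h1, h2⟩ k
    rcases eq_or_ne k j with rfl | hk
    · simp [Function.update_self, h2]
    · simp [Function.update_of_ne hk, h1 k]
  · intro h
    have hj := h j
    simp only [Function.update_self, Finset.mem_singleton] at hj
    refine ⟨fun k => ?_, hj⟩
    rcases eq_or_ne k j with rfl | hk
    · rw [hj]; exact hx
    · have := h k
      simpa [Function.update_of_ne hk] using this

lemma sum_piFinset_apply {α : Type*} [DecidableEq α] {M : ℕ}
    (C : Fin M → Finset α) (j : Fin M) (f : α → ℝ) :
    ∑ T ∈ Fintype.piFinset C, f (T j)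
      = (∏ k ∈ Finset.univ.erase j, ((C k).card : ℝ)) * ∑ x ∈ C j, f x := by
  rw [← Finset.sum_fiberwise_of_maps_to (g := fun T => T j)
      (fun T hT => (Fintype.mem_piFinset.mp hT) j)]
  rw [Finset.mul_sum]
  refine Finset.sum_congr rfl fun x hx => ?_
  have h1 : ∑ T ∈ (Fintype.piFinset C).filter (fun T => T j = x), f (T j)
      = ∑ T ∈ (Fintype.piFinset C).filter (fun T => T j = x), f x := by
    refine Finset.sum_congr rfl fun T hT => ?_
    rw [(Finset.mem_filter.mp hT).2]
  rw [h1, Finset.sum_const, nsmul_eq_mul]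
  congr 1
  rw [filter_eq_piFinset_update C j x hx, Fintype.card_piFinset]
  push_cast
  rw [← Finset.mul_prod_erase _ _ (Finset.mem_univ j)]
  have h2 : ((Function.update C j {x} j).card : ℝ) = 1 := by simp
  rw [h2, one_mul]
  exact Finset.prod_congr rfl fun k hk => by
    rw [Function.update_of_ne (Finset.ne_of_mem_erase hk)]

theorem ppts_label_in_task_probability {α : Type*} [DecidableEq α] (M K : ℕ)
    (hM : 0 < M) (hK : 0 < K)
    (C : Fin M → Finset α) (n : α → ℕ)
    (hcard : ∀ i, (C i).card = K)
    (hdisj : ∀ i j, i ≠ j → Disjoint (C i) (C j))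
    (hn : ∀ i, ∀ c ∈ C i, 0 < n c)
    (i : Fin M) (c : α) (hc : c ∈ C i) :
    ∑ T ∈ (Fintype.piFinset C).filter (fun T => T i = c),
        ((∑ j, n (T j) : ℝ) / (∑ T' ∈ Fintype.piFinset C, (∑ j, n (T' j) : ℝ)))
      = ((n c : ℝ) + (∑ i' ∈ Finset.univ.erase i, ∑ c' ∈ C i', (n c' : ℝ)) / K)
          / (∑ i' : Fin M, ∑ c' ∈ C i', (n c' : ℝ)) := by
  set f : α → ℝ := fun x => (n x : ℝ) with hf
  set S : ℝ := ∑ i' : Fin M, ∑ c' ∈ C i', f c' with hS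
  set Smi : ℝ := ∑ i' ∈ Finset.univ.erase i, ∑ c' ∈ C i', f c' with hSmi
  set C' : Fin M → Finset α := Function.update C i {c} with hC'
  have hKR : (K : ℝ) ≠ 0 := Nat.cast_ne_zero.mpr hK.ne'
  -- denominator
  have hden : (∑ T' ∈ Fintype.piFinset C, (∑ j, f (T' j))) = (K : ℝ) ^ (M - 1) * S := by
    rw [Finset.sum_comm]
    have h : ∀ j : Fin M, ∑ T ∈ Fintype.piFinset C, f (T j)
        = (K : ℝ) ^ (M - 1) * ∑ x ∈ C j, f x := by
      intro j
      rw [sum_piFinset_apply]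
      congr 1
      rw [Finset.prod_congr rfl (fun k _ => by rw [hcard k]), Finset.prod_const,
        Finset.card_erase_of_mem (Finset.mem_univ j), Finset.card_univ, Fintype.card_fin]
    rw [Finset.sum_congr rfl (fun j _ => h j), ← Finset.mul_sum, hS]
  -- numerator
  have hnum : (∑ T ∈ (Fintype.piFinset C).filter (fun T => T i = c), (∑ j, f (T j)))
      = (K : ℝ) ^ (M - 1) * f c + (K : ℝ) ^ (M - 2) * Smi := by
    rw [filter_eq_piFinset_update C i c hc, Finset.sum_comm]
    rw [Finset.sum_congr rfl (fun j _ => sum_piFinset_apply C' j f)]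
    rw [← Finset.add_sum_erase _ _ (Finset.mem_univ i)]
    congr 1
    · have h1 : ∑ x ∈ C' i, f x = f c := by simp [hC']
      have h2 : (∏ k ∈ Finset.univ.erase i, ((C' k).card : ℝ)) = (K : ℝ) ^ (M - 1) := by
        rw [Finset.prod_congr rfl (fun k hk => by
          rw [hC', Function.update_of_ne (Finset.ne_of_mem_erase hk), hcard k])]
        rw [Finset.prod_const, Finset.card_erase_of_mem (Finset.mem_univ i),
          Finset.card_univ, Fintype.card_fin]
      rw [h1, h2]
    · rw [Finset.mul_sum]
      refine Finset.sum_congr rfl fun j hj => ?_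
      have hji : j ≠ i := Finset.ne_of_mem_erase hj
      have h1 : ∑ x ∈ C' j, f x = ∑ x ∈ C j, f x := by
        rw [hC', Function.update_of_ne hji]
      have hij : i ∈ Finset.univ.erase j := Finset.mem_erase.mpr ⟨hji.symm, Finset.mem_univ i⟩
      have h2 : (∏ k ∈ Finset.univ.erase j, ((C' k).card : ℝ)) = (K : ℝ) ^ (M - 2) := by
        rw [← Finset.mul_prod_erase _ _ hij]
        have hci : ((C' i).card : ℝ) = 1 := by simp [hC']
        rw [hci, one_mul]
        rw [Finset.prod_congr rfl (fun k hk => by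
          have hki : k ≠ i := Finset.ne_of_mem_erase hk
          rw [hC', Function.update_of_ne hki, hcard k])]
        rw [Finset.prod_const, Finset.card_erase_of_mem hij,
          Finset.card_erase_of_mem (Finset.mem_univ j), Finset.card_univ, Fintype.card_fin]
        congr 1
      rw [h1, h2]
  -- key arithmetic fact
  have hkey : (K : ℝ) ^ (M - 2) * Smi = (K : ℝ) ^ (M - 1) * (Smi / K) := by
    rcases Nat.lt_or_ge M 2 with hM2 | hM2
    · have hM1 : M = 1 := by omega
      subst hM1
      have he : (Finset.univ.erase i : Finset (Fin 1)) = ∅ := by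
        apply Finset.eq_empty_of_forall_notMem
        intro x hx
        exact absurd (Subsingleton.elim x i) (Finset.ne_of_mem_erase hx)
      rw [hSmi, he]
      simp
    · have : M - 1 = (M - 2) + 1 := by omega
      rw [this, pow_succ]
      field_simp
  rw [← Finset.sum_div, hnum, hden, hkey, ← mul_add,
    mul_div_mul_left _ _ (pow_ne_zero (M - 1) hKR)]
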